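/- Let P be symmetric positive semidefinite, F monotone, and suppose P(z_k - z_{k+1}) ∈ F(z_{k+1}) for all k. Then the generalized IDS is non-increasing: dist²_{P^-}(0, F(z_{k+1}) ∩ range(P)) ≤ dist²_{P^-}(0, F(z_k) ∩ range(P)), with decrease at least ‖ω̃_{k+1} - ω_k‖²_{P^-} where ω̃_{k+1} = P(z_k - z_{k+1}) and ω_k is the minimizer at step k. -/

import Mathlib

open Matrix

/-- Quadratic form `⟨v, G v⟩`. -/
def qf {ι : Type*} [Fintype ι] (G : Matrix ι ι ℝ) (v : ι → ℝ) : ℝ := v ⬝ᵥ G.mulVec v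

/-- The range (column space) of a matrix, as a set of vectors. -/
def mrange {ι : Type*} [Fintype ι] (P : Matrix ι ι ℝ) : Set (ι → ℝ) :=
  {w | ∃ u, w = P.mulVec u}

/-- helper: `v ⬝ᵥ A w = Aᵀ v ⬝ᵥ w`. -/
lemma dot_mulVec_eq {d : ℕ} (A : Matrix (Fin d) (Fin d) ℝ) (v w : Fin d → ℝ) :
    v ⬝ᵥ A.mulVec w = Aᵀ.mulVec v ⬝ᵥ w := by
  rw [Matrix.dotProduct_mulVec, ← Matrix.mulVec_transpose]

/-- A pseudo-inverse of a symmetric matrix is symmetric (uniqueness argument). -/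
lemma pinv_symm {d : ℕ} (P Pm : Matrix (Fin d) (Fin d) ℝ)
    (hPsym : Pᵀ = P)
    (hp1 : P * Pm * P = P) (hp2 : Pm * P * Pm = Pm)
    (hp3 : (P * Pm)ᵀ = P * Pm) (hp4 : (Pm * P)ᵀ = Pm * P) : Pmᵀ = Pm := by
  have hCP : Pmᵀ * P = P * Pm := by rw [← hp3, Matrix.transpose_mul, hPsym]
  have hPC : P * Pmᵀ = Pm * P := by rw [← hp4, Matrix.transpose_mul, hPsym]
  have hPCP : P * Pmᵀ * P = P := by
    have h : (P * Pm * P)ᵀ = P := by rw [hp1, hPsym]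
    calc P * Pmᵀ * P = (P * Pm * P)ᵀ := by
          rw [Matrix.transpose_mul, Matrix.transpose_mul, hPsym, ← mul_assoc]
    _ = P := h
  have h2 : Pmᵀ * P * Pmᵀ = Pmᵀ := by
    calc Pmᵀ * P * Pmᵀ = (Pm * P * Pm)ᵀ := by
          rw [Matrix.transpose_mul, Matrix.transpose_mul, hPsym, ← mul_assoc]
    _ = Pmᵀ := by rw [hp2]
  have symm1 : (P * Pmᵀ)ᵀ = P * Pmᵀ := by rw [hPC, hp4]
  have symm2 : (Pmᵀ * P)ᵀ = Pmᵀ * P := by rw [hCP, hp3]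
  have hA : P * Pm = P * Pmᵀ := by
    have e1 : (P * Pm) * (P * Pmᵀ) = P * Pmᵀ := by
      rw [← mul_assoc, hp1]
    calc P * Pm = (P * Pmᵀ * P) * Pm := by rw [hPCP]
    _ = (P * Pmᵀ) * (P * Pm) := by rw [mul_assoc (P * Pmᵀ) P Pm]
    _ = ((P * Pm) * (P * Pmᵀ))ᵀ := by rw [Matrix.transpose_mul, hp3, symm1]
    _ = (P * Pmᵀ)ᵀ := by rw [e1]
    _ = P * Pmᵀ := symm1
  have hB : Pm * P = Pmᵀ * P := by
    have e1 : (Pmᵀ * P) * (Pm * P) = Pmᵀ * P := by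
      rw [mul_assoc Pmᵀ P (Pm * P), ← mul_assoc P Pm P, hp1]
    calc Pm * P = Pm * (P * Pmᵀ * P) := by rw [hPCP]
    _ = (Pm * P) * (Pmᵀ * P) := by
          rw [mul_assoc P Pmᵀ P, ← mul_assoc Pm P (Pmᵀ * P)]
    _ = ((Pmᵀ * P) * (Pm * P))ᵀ := by rw [Matrix.transpose_mul, hp4, symm2]
    _ = (Pmᵀ * P)ᵀ := by rw [e1]
    _ = Pmᵀ * P := symm2
  calc Pmᵀ = Pmᵀ * P * Pmᵀ := h2.symm
  _ = (Pm * P) * Pmᵀ := by rw [← hB]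
  _ = Pm * (P * Pmᵀ) := mul_assoc Pm P Pmᵀ
  _ = Pm * (P * Pm) := by rw [← hA]
  _ = Pm * P * Pm := (mul_assoc Pm P Pm).symm
  _ = Pm := hp2

/-- Monotone decay of the generalized IDS for a positive semidefinite `P`
(with Moore–Penrose pseudo-inverse `Pm`): if `ω_k` is the minimizer at step `k`,
then the IDS decreases by at least `‖ω̃_{k+1} - ω_k‖²_{P⁻}` where
`ω̃_{k+1} = P(z_k - z_{k+1})`. -/
theorem stmt18 {d : ℕ} (P Pm : Matrix (Fin d) (Fin d) ℝ)
    (hP : P.PosSemidef)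
    (hp1 : P * Pm * P = P) (hp2 : Pm * P * Pm = Pm)
    (hp3 : (P * Pm)ᵀ = P * Pm) (hp4 : (Pm * P)ᵀ = Pm * P)
    (F : (Fin d → ℝ) → Set (Fin d → ℝ))
    (hmono : ∀ z z' u v, u ∈ F z → v ∈ F z' → 0 ≤ (u - v) ⬝ᵥ (z - z'))
    (z : ℕ → Fin d → ℝ)
    (hstep : ∀ i, P.mulVec (z i - z (i+1)) ∈ F (z (i+1)))
    (k : ℕ)
    (ωk : Fin d → ℝ) (hωk : ωk ∈ F (z k) ∩ mrange P)
    (hmin : qf Pm ωk = sInf (qf Pm '' (F (z k) ∩ mrange P))) :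
    sInf (qf Pm '' (F (z (k+1)) ∩ mrange P))
      ≤ sInf (qf Pm '' (F (z k) ∩ mrange P))
        - qf Pm (P.mulVec (z k - z (k+1)) - ωk) := by
  have hPsym : Pᵀ = P := by
    have := hP.1; unfold Matrix.IsHermitian at this; simpa using this
  have hPmsym : Pmᵀ = Pm := pinv_symm P Pm hPsym hp1 hp2 hp3 hp4
  -- Pm is PSD, so qf Pm is nonnegative everywhere
  have hqf_nonneg : ∀ v : Fin d → ℝ, 0 ≤ qf Pm v := by
    intro v
    have h : qf Pm v = (Pm.mulVec v) ⬝ᵥ P.mulVec (Pm.mulVec v) := by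
      unfold qf
      conv_lhs => rw [← hp2]
      rw [← Matrix.mulVec_mulVec, ← Matrix.mulVec_mulVec, dot_mulVec_eq, hPmsym]
    rw [h]
    have := hP.dotProduct_mulVec_nonneg (Pm.mulVec v); simpa using this
  set u : Fin d → ℝ := z k - z (k+1) with hu
  set ω' : Fin d → ℝ := P.mulVec u with hω'
  set δ : Fin d → ℝ := ω' - ωk with hδ
  obtain ⟨⟨hωkF, v, hv⟩, -⟩ : (ωk ∈ F (z k) ∧ _) ∧ True := ⟨hωk, trivial⟩
  -- δ is in the range of P
  have hδr : δ = P.mulVec (u - v) := by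
    rw [hδ, hω', hv, ← Matrix.mulVec_sub]
  -- (Pm * P) δ = δ
  have hfix : (Pm * P).mulVec δ = δ := by
    have hcomm : Pm * P = P * Pm := by
      rw [← hp4, Matrix.transpose_mul, hPsym, hPmsym]
    rw [hδr, Matrix.mulVec_mulVec, hcomm, mul_assoc, ← Matrix.mulVec_mulVec,
      Matrix.mulVec_mulVec, ← mul_assoc, hp1]
  -- key: ⟨δ, Pm ω'⟩ ≤ 0 by monotonicity
  have hkey : δ ⬝ᵥ Pm.mulVec ω' ≤ 0 := by
    have h1 : δ ⬝ᵥ Pm.mulVec ω' = δ ⬝ᵥ u := by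
      rw [hω', Matrix.mulVec_mulVec, dot_mulVec_eq, hp4, hfix]
    have h2 : 0 ≤ (ωk - ω') ⬝ᵥ (z k - z (k+1)) :=
      hmono (z k) (z (k+1)) ωk ω' hωkF (hstep k)
    have h3 : δ ⬝ᵥ u = -((ωk - ω') ⬝ᵥ (z k - z (k+1))) := by
      rw [hδ, hu, ← neg_dotProduct, neg_sub]
    rw [h1, h3]; linarith
  -- symmetry of Pm in dot products
  have hsymdot : ∀ a b : Fin d → ℝ, a ⬝ᵥ Pm.mulVec b = b ⬝ᵥ Pm.mulVec a := by
    intro a b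
    rw [dot_mulVec_eq, hPmsym, dotProduct_comm]
  -- expansion: qf Pm ω' = qf Pm ωk + 2 ⟨δ, Pm ωk⟩ + qf Pm δ
  have hexp : qf Pm ω' = qf Pm ωk + 2 * (δ ⬝ᵥ Pm.mulVec ωk) + qf Pm δ := by
    have : ω' = ωk + δ := by rw [hδ]; ring
    rw [this]
    unfold qf
    rw [Matrix.mulVec_add, add_dotProduct, dotProduct_add,
      dotProduct_add, hsymdot ωk δ]
    ring
  have hsplit : δ ⬝ᵥ Pm.mulVec ω' = δ ⬝ᵥ Pm.mulVec ωk + qf Pm δ := by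
    have : ω' = ωk + δ := by rw [hδ]; ring
    rw [this, Matrix.mulVec_add, dotProduct_add]; rfl
  -- hence qf Pm ω' ≤ qf Pm ωk - qf Pm δ
  have hmain : qf Pm ω' ≤ qf Pm ωk - qf Pm δ := by
    have : δ ⬝ᵥ Pm.mulVec ωk ≤ -qf Pm δ := by
      rw [hsplit] at hkey; linarith
    rw [hexp]; linarith
  -- ω' is in the constraint set at step k+1
  have hω'mem : ω' ∈ F (z (k+1)) ∩ mrange P := ⟨hstep k, u, rfl⟩
  have hbdd : BddBelow (qf Pm '' (F (z (k+1)) ∩ mrange P)) := by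
    refine ⟨0, ?_⟩
    rintro x ⟨w, -, rfl⟩
    exact hqf_nonneg w
  have hle : sInf (qf Pm '' (F (z (k+1)) ∩ mrange P)) ≤ qf Pm ω' :=
    csInf_le hbdd ⟨ω', hω'mem, rfl⟩
  calc sInf (qf Pm '' (F (z (k+1)) ∩ mrange P)) ≤ qf Pm ω' := hle
  _ ≤ qf Pm ωk - qf Pm δ := hmain
  _ = sInf (qf Pm '' (F (z k) ∩ mrange P)) - qf Pm (P.mulVec (z k - z (k+1)) - ωk) := by
      rw [hmin]
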